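/- (Burgunder splitting of a doubly adjoint element.) Let K be a commutative ring which is a ℚ-algebra, Λ a finite type, μ ∈ Λ, and m ≥ 1. Let P ∈ FreeAlgebra K Λ be a Lie polynomial which lies in the K-span of the words of length exactly m. Set x := X_μ. Then in FreeAlgebra K Λ ⊗_K FreeAlgebra K Λ: ∑_{λ∈Λ} X_λ ⊗ 𝔇^L(∂^L_λ(⁅x,⁅x,P⁆⁆)) = (m+2) • (x ⊗ ⁅x,P⁆). -/

import Mathlib

open scoped TensorProduct

attribute [local instance 100] LieRing.ofAssociativeRing

/-- Left-iterated Lie bracket `[Z₁, …, Z_p]_L` (equal to `Z₁` for a singleton list, `0` for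
the empty list). -/
def bracketL {L : Type*} [LieRing L] : List L → L
  | [] => 0
  | [z] => z
  | z :: w :: ws => ⁅z, bracketL (w :: ws)⁆

/-- The word `X_{λ₁} ⋯ X_{λ_p}` given by a list of letters. -/
def word (K : Type*) [CommRing K] {Λ : Type*} (ℓ : List Λ) : FreeAlgebra K Λ :=
  (ℓ.map (FreeAlgebra.ι K)).prod

/-- `𝔇^L`, the `K`-linear map with `𝔇^L(X_{λ₁} ⋯ X_{λ_p}) = [X_{λ₁}, …, X_{λ_p}]_L` and
`𝔇^L(1) = 0`. -/
noncomputable def DynL (K : Type*) [CommRing K] (Λ : Type*) :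
    FreeAlgebra K Λ →ₗ[K] FreeAlgebra K Λ :=
  (FreeAlgebra.basisFreeMonoid K Λ).constr K fun w =>
    bracketL (w.toList.map (FreeAlgebra.ι K))

/-- `∂^L_μ`, the `K`-linear map sending a word starting with `μ` to the word with the first
letter removed, and all other words (and `1`) to `0`. -/
noncomputable def partialL (K : Type*) [CommRing K] {Λ : Type*} [DecidableEq Λ] (μ : Λ) :
    FreeAlgebra K Λ →ₗ[K] FreeAlgebra K Λ :=
  (FreeAlgebra.basisFreeMonoid K Λ).constr K fun w =>
    if w.toList.head? = some μ then word K w.toList.tail else 0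

namespace BurgunderAux

variable (K : Type*) [CommRing K] (Λ : Type*)

lemma word_nil : word K ([] : List Λ) = 1 := rfl

variable {Λ}

lemma word_cons (a : Λ) (ℓ : List Λ) :
    word K (a :: ℓ) = FreeAlgebra.ι K a * word K ℓ := by
  simp [word]

lemma word_singleton (a : Λ) : word K [a] = FreeAlgebra.ι K a := by
  simp [word]

lemma word_append (ℓ ℓ' : List Λ) : word K (ℓ ++ ℓ') = word K ℓ * word K ℓ' := by
  simp [word]

lemma basis_apply (w : FreeMonoid Λ) :
    FreeAlgebra.basisFreeMonoid K Λ w = word K (FreeMonoid.toList w) := by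
  simp only [FreeAlgebra.basisFreeMonoid, FreeAlgebra.equivMonoidAlgebraFreeMonoid, word,
    Module.Basis.map_apply, Finsupp.coe_basisSingleOne, AlgEquiv.toLinearEquiv_apply,
    AlgEquiv.ofAlgHom_symm_apply]
  erw [MonoidAlgebra.lift_single]
  rw [one_smul, FreeMonoid.lift_apply]

lemma word_eq_basis (ℓ : List Λ) :
    word K ℓ = FreeAlgebra.basisFreeMonoid K Λ (FreeMonoid.ofList ℓ) :=
  (basis_apply K (FreeMonoid.ofList ℓ)).symm

variable (Λ)

lemma DynL_word (ℓ : List Λ) :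
    DynL K Λ (word K ℓ) = bracketL (ℓ.map (FreeAlgebra.ι K)) := by
  conv_lhs => rw [word_eq_basis, DynL]
  rw [Module.Basis.constr_basis]
  rfl

lemma partialL_word [DecidableEq Λ] (lam : Λ) (ℓ : List Λ) :
    partialL K lam (word K ℓ) = if ℓ.head? = some lam then word K ℓ.tail else 0 := by
  conv_lhs => rw [word_eq_basis, partialL]
  rw [Module.Basis.constr_basis]
  rfl

/-- Everything is in the span of the words. -/
lemma mem_span_words (a : FreeAlgebra K Λ) :
    a ∈ Submodule.span K {y : FreeAlgebra K Λ | ∃ ℓ : List Λ, y = word K ℓ} := by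
  refine Submodule.span_mono ?_ ((FreeAlgebra.basisFreeMonoid K Λ).mem_span a)
  rintro _ ⟨w, rfl⟩
  exact ⟨FreeMonoid.toList w, (basis_apply K w)⟩

/-- The span of the nonempty words (the augmentation ideal). -/
def A : Submodule K (FreeAlgebra K Λ) :=
  Submodule.span K {y : FreeAlgebra K Λ | ∃ ℓ : List Λ, ℓ ≠ [] ∧ y = word K ℓ}

lemma word_mem_A {ℓ : List Λ} (h : ℓ ≠ []) : word K ℓ ∈ A K Λ :=
  Submodule.subset_span ⟨ℓ, h, rfl⟩

lemma ι_mem_A (a : Λ) : FreeAlgebra.ι K a ∈ A K Λ := by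
  rw [← word_singleton K a]; exact word_mem_A K Λ (by simp)

lemma A_mul_mem {a b : FreeAlgebra K Λ} (ha : a ∈ A K Λ) (hb : b ∈ A K Λ) :
    a * b ∈ A K Λ := by
  induction ha, hb using Submodule.span_induction₂ with
  | mem_mem x y hx hy =>
    obtain ⟨ℓ, hℓ, rfl⟩ := hx
    obtain ⟨ℓ', hℓ', rfl⟩ := hy
    rw [← word_append]
    exact word_mem_A K Λ (by simp [hℓ])
  | zero_left y hy => simpa using Submodule.zero_mem _
  | zero_right x hx => simpa using Submodule.zero_mem _
  | add_left x y z hx hy hz h1 h2 => simpa [add_mul] using Submodule.add_mem _ h1 h2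
  | add_right x y z hx hy hz h1 h2 => simpa [mul_add] using Submodule.add_mem _ h1 h2
  | smul_left r x y hx hy h => simpa [smul_mul_assoc] using Submodule.smul_mem _ r h
  | smul_right r x y hx hy h => simpa [mul_smul_comm] using Submodule.smul_mem _ r h

/-- The algebra map sending a word to the composition of the adjoint maps of its letters. -/
noncomputable def theta : FreeAlgebra K Λ →ₐ[K] Module.End K (FreeAlgebra K Λ) :=
  FreeAlgebra.lift K fun lam =>
    LieAlgebra.ad K (FreeAlgebra K Λ) (FreeAlgebra.ι K lam)

lemma theta_ι (lam : Λ) (y : FreeAlgebra K Λ) :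
    theta K Λ (FreeAlgebra.ι K lam) y = ⁅FreeAlgebra.ι K lam, y⁆ := by
  rw [theta, FreeAlgebra.lift_ι_apply, LieAlgebra.ad_apply]

lemma bracketL_cons {L : Type*} [LieRing L] (z : L) {l : List L} (h : l ≠ []) :
    bracketL (z :: l) = ⁅z, bracketL l⁆ := by
  cases l with
  | nil => exact absurd rfl h
  | cons w ws => rfl

lemma bracketL_map_append (ℓ : List Λ) {ℓ' : List Λ} (h : ℓ' ≠ []) :
    bracketL ((ℓ ++ ℓ').map (FreeAlgebra.ι K)) =
      theta K Λ (word K ℓ) (bracketL (ℓ'.map (FreeAlgebra.ι K))) := by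
  induction ℓ with
  | nil => simp [word_nil]
  | cons a ℓ ih =>
    have hne : ((ℓ ++ ℓ').map (FreeAlgebra.ι K)) ≠ [] := by simp [h]
    rw [List.cons_append, List.map_cons, bracketL_cons _ hne, ih, word_cons, map_mul,
      Module.End.mul_apply, theta_ι]

lemma DynL_mul {a b : FreeAlgebra K Λ} (hb : b ∈ A K Λ) :
    DynL K Λ (a * b) = theta K Λ a (DynL K Λ b) := by
  induction hb using Submodule.span_induction with
  | mem y hy =>
    obtain ⟨ℓ', hℓ', rfl⟩ := hy
    have key : ∀ a : FreeAlgebra K Λ,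
        DynL K Λ (a * word K ℓ') = theta K Λ a (DynL K Λ (word K ℓ')) := by
      intro a
      induction mem_span_words K Λ a using Submodule.span_induction with
      | mem y hy =>
        obtain ⟨ℓ, rfl⟩ := hy
        rw [← word_append, DynL_word, DynL_word, bracketL_map_append K Λ ℓ hℓ']
      | zero => simp
      | add x y hx hy h1 h2 => simp [add_mul, h1, h2]
      | smul r x hx h => simp [smul_mul_assoc, h]
    exact key a
  | zero => simp
  | add x y hx hy h1 h2 => simp [mul_add, h1, h2]
  | smul r x hx h => simp [mul_smul_comm, h]

/-- The Euler (grading) operator. -/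
noncomputable def euler : FreeAlgebra K Λ →ₗ[K] FreeAlgebra K Λ :=
  (FreeAlgebra.basisFreeMonoid K Λ).constr K fun w =>
    (FreeMonoid.toList w).length • word K (FreeMonoid.toList w)

lemma euler_word (ℓ : List Λ) : euler K Λ (word K ℓ) = ℓ.length • word K ℓ := by
  conv_lhs => rw [word_eq_basis, euler]
  rw [Module.Basis.constr_basis]
  rfl

lemma euler_mul (a b : FreeAlgebra K Λ) :
    euler K Λ (a * b) = euler K Λ a * b + a * euler K Λ b := by
  induction mem_span_words K Λ a, mem_span_words K Λ b using Submodule.span_induction₂ with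
  | mem_mem x y hx hy =>
    obtain ⟨ℓ, rfl⟩ := hx
    obtain ⟨ℓ', rfl⟩ := hy
    rw [← word_append, euler_word, euler_word, euler_word, word_append, List.length_append,
      add_smul, smul_mul_assoc, mul_smul_comm]
  | zero_left y hy => simp
  | zero_right x hx => simp
  | add_left x y z hx hy hz h1 h2 =>
    simp only [add_mul, map_add, h1, h2]; abel
  | add_right x y z hx hy hz h1 h2 =>
    simp only [mul_add, map_add, h1, h2]; abel
  | smul_left r x y hx hy h =>
    simp only [smul_mul_assoc, map_smul, h, smul_add]
  | smul_right r x y hx hy h =>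
    simp only [mul_smul_comm, map_smul, h, smul_add]

lemma euler_ι (a : Λ) : euler K Λ (FreeAlgebra.ι K a) = FreeAlgebra.ι K a := by
  conv_lhs => rw [← word_singleton K a, euler_word]
  rw [word_singleton, List.length_singleton, one_smul]

lemma DynL_ι (a : Λ) : DynL K Λ (FreeAlgebra.ι K a) = FreeAlgebra.ι K a := by
  conv_lhs => rw [← word_singleton K a, DynL_word]
  rfl

/-- The Lie subalgebra of elements on which everything behaves well. -/
noncomputable def S : LieSubalgebra K (FreeAlgebra K Λ) where
  carrier := {u | u ∈ A K Λ ∧ theta K Λ u = LieAlgebra.ad K (FreeAlgebra K Λ) u ∧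
    DynL K Λ u = euler K Λ u}
  zero_mem' := ⟨Submodule.zero_mem _, by simp, by simp⟩
  add_mem' := by
    rintro a b ⟨ha1, ha2, ha3⟩ ⟨hb1, hb2, hb3⟩
    exact ⟨Submodule.add_mem _ ha1 hb1, by simp [map_add, ha2, hb2],
      by simp [map_add, ha3, hb3]⟩
  smul_mem' := by
    rintro c a ⟨ha1, ha2, ha3⟩
    exact ⟨Submodule.smul_mem _ c ha1, by simp [map_smul, ha2], by simp [map_smul, ha3]⟩
  lie_mem' := by
    rintro u v ⟨hu1, hu2, hu3⟩ ⟨hv1, hv2, hv3⟩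
    refine ⟨?_, ?_, ?_⟩
    · rw [Ring.lie_def]
      exact Submodule.sub_mem _ (A_mul_mem K Λ hu1 hv1) (A_mul_mem K Λ hv1 hu1)
    · ext y
      simp only [Ring.lie_def, map_sub, map_mul, hu2, hv2, LinearMap.sub_apply,
        Module.End.mul_apply, LieAlgebra.ad_apply, Ring.lie_def]
      noncomm_ring
    · have h1 : DynL K Λ ⁅u, v⁆ = theta K Λ u (DynL K Λ v) - theta K Λ v (DynL K Λ u) := by
        rw [Ring.lie_def, map_sub, DynL_mul K Λ hv1, DynL_mul K Λ hu1]
      rw [h1, hu3, hv3, hu2, hv2, LieAlgebra.ad_apply, LieAlgebra.ad_apply]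
      simp only [Ring.lie_def, map_sub, euler_mul K Λ]
      noncomm_ring

lemma lie_mem_S {P : FreeAlgebra K Λ}
    (h : P ∈ LieSubalgebra.lieSpan K (FreeAlgebra K Λ) (Set.range (FreeAlgebra.ι K))) :
    P ∈ A K Λ ∧ theta K Λ P = LieAlgebra.ad K (FreeAlgebra K Λ) P ∧
      DynL K Λ P = euler K Λ P := by
  have : LieSubalgebra.lieSpan K (FreeAlgebra K Λ) (Set.range (FreeAlgebra.ι K)) ≤ S K Λ := by
    apply LieSubalgebra.lieSpan_le.2
    rintro _ ⟨a, rfl⟩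
    refine ⟨ι_mem_A K Λ a, ?_, ?_⟩
    · ext y
      rw [theta_ι, LieAlgebra.ad_apply]
    · rw [DynL_ι, euler_ι]
  exact this h

lemma euler_of_hom {m : ℕ} {P : FreeAlgebra K Λ}
    (hP : P ∈ Submodule.span K
      {y : FreeAlgebra K Λ | ∃ ℓ : List Λ, ℓ.length = m ∧ y = word K ℓ}) :
    euler K Λ P = m • P := by
  induction hP using Submodule.span_induction with
  | mem y hy => obtain ⟨ℓ, hℓ, rfl⟩ := hy; rw [euler_word, hℓ]
  | zero => simp
  | add x y hx hy h1 h2 => simp [h1, h2]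
  | smul r x hx h => rw [map_smul, h, smul_comm]

lemma partialL_ι_mul [DecidableEq Λ] (lam μ : Λ) (a : FreeAlgebra K Λ) :
    partialL K lam (FreeAlgebra.ι K μ * a) = if lam = μ then a else 0 := by
  induction mem_span_words K Λ a using Submodule.span_induction with
  | mem y hy =>
    obtain ⟨ℓ, rfl⟩ := hy
    rw [← word_cons, partialL_word]
    simp only [List.head?_cons, Option.some.injEq, List.tail_cons]
    by_cases h : lam = μ <;> simp [h, eq_comm]
  | zero => simp
  | add x y hx hy h1 h2 =>
    rw [mul_add, map_add, h1, h2]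
    by_cases h : lam = μ <;> simp [h]
  | smul r x hx h =>
    rw [mul_smul_comm, map_smul, h]
    by_cases h : lam = μ <;> simp [h]

lemma partialL_mul_ι [DecidableEq Λ] (lam μ : Λ) {a : FreeAlgebra K Λ} (ha : a ∈ A K Λ) :
    partialL K lam (a * FreeAlgebra.ι K μ) = partialL K lam a * FreeAlgebra.ι K μ := by
  induction ha using Submodule.span_induction with
  | mem y hy =>
    obtain ⟨ℓ, hℓ, rfl⟩ := hy
    obtain ⟨c, ℓ', rfl⟩ := List.exists_cons_of_ne_nil hℓ
    rw [show word K (c :: ℓ') * FreeAlgebra.ι K μ = word K ((c :: ℓ') ++ [μ]) by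
      rw [word_append, word_singleton], partialL_word, partialL_word]
    simp only [List.cons_append, List.head?_cons, List.tail_cons]
    by_cases h : c = lam <;> simp [h, word_append, word_singleton]
  | zero => simp
  | add x y hx hy h1 h2 => rw [add_mul, map_add, map_add, h1, h2, add_mul]
  | smul r x hx h => rw [smul_mul_assoc, map_smul, map_smul, h, smul_mul_assoc]

end BurgunderAux

open BurgunderAux in
/-- (Burgunder splitting of a doubly adjoint element.)  If `P` is a Lie polynomial lying in
the span of the words of length `m ≥ 1` and `x = X_μ`, then
`∑_λ X_λ ⊗ 𝔇^L(∂^L_λ ⁅x, ⁅x, P⁆⁆) = (m + 2) • (x ⊗ ⁅x, P⁆)`. -/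
theorem burgunder_splitting_doubly_adjoint (K : Type*) [CommRing K] [Algebra ℚ K]
    (Λ : Type*) [Fintype Λ] [DecidableEq Λ] (μ : Λ) (m : ℕ) (hm : 1 ≤ m)
    (P : FreeAlgebra K Λ)
    (hPlie : P ∈ LieSubalgebra.lieSpan K (FreeAlgebra K Λ) (Set.range (FreeAlgebra.ι K)))
    (hPhom : P ∈ Submodule.span K
      {y : FreeAlgebra K Λ | ∃ ℓ : List Λ, ℓ.length = m ∧ y = word K ℓ}) :
    (∑ lam : Λ,
        FreeAlgebra.ι K lam ⊗ₜ[K]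
          DynL K Λ (partialL K lam ⁅FreeAlgebra.ι K μ, ⁅FreeAlgebra.ι K μ, P⁆⁆)) =
      (m + 2) • (FreeAlgebra.ι K μ ⊗ₜ[K] ⁅FreeAlgebra.ι K μ, P⁆) := by
  obtain ⟨hPA, hPtheta, hPDyn⟩ := lie_mem_S K Λ hPlie
  have hxA : FreeAlgebra.ι K μ ∈ A K Λ := ι_mem_A K Λ μ
  have hRA : ⁅FreeAlgebra.ι K μ, P⁆ ∈ A K Λ := by
    rw [Ring.lie_def]
    exact Submodule.sub_mem _ (A_mul_mem K Λ hxA hPA) (A_mul_mem K Λ hPA hxA)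
  have hDynx : DynL K Λ (FreeAlgebra.ι K μ) = FreeAlgebra.ι K μ := DynL_ι K Λ μ
  have hEP : euler K Λ P = m • P := euler_of_hom K Λ hPhom
  have hPx : DynL K Λ (P * FreeAlgebra.ι K μ) = -⁅FreeAlgebra.ι K μ, P⁆ := by
    rw [DynL_mul K Λ hxA, hDynx, hPtheta, LieAlgebra.ad_apply, ← lie_skew]
  have e1 : DynL K Λ (FreeAlgebra.ι K μ * P) = m • ⁅FreeAlgebra.ι K μ, P⁆ := by
    rw [DynL_mul K Λ hPA, hPDyn, hEP, map_nsmul, theta_ι]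
  have hDynR : DynL K Λ ⁅FreeAlgebra.ι K μ, P⁆ = (m + 1) • ⁅FreeAlgebra.ι K μ, P⁆ := by
    conv_lhs => rw [Ring.lie_def]
    rw [map_sub, e1, hPx, sub_neg_eq_add, succ_nsmul]
  have key : ∀ lam : Λ,
      DynL K Λ (partialL K lam ⁅FreeAlgebra.ι K μ, ⁅FreeAlgebra.ι K μ, P⁆⁆) =
        if lam = μ then (m + 2) • ⁅FreeAlgebra.ι K μ, P⁆ else 0 := by
    intro lam
    have hpR : partialL K lam ⁅FreeAlgebra.ι K μ, P⁆ =
        (if lam = μ then P else 0) - partialL K lam P * FreeAlgebra.ι K μ := by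
      conv_lhs => rw [Ring.lie_def]
      rw [map_sub, partialL_ι_mul, partialL_mul_ι K Λ lam μ hPA]
    have hpQ : partialL K lam ⁅FreeAlgebra.ι K μ, ⁅FreeAlgebra.ι K μ, P⁆⁆ =
        (if lam = μ then ⁅FreeAlgebra.ι K μ, P⁆ else 0) -
          ((if lam = μ then P else 0) * FreeAlgebra.ι K μ -
            partialL K lam P * FreeAlgebra.ι K μ * FreeAlgebra.ι K μ) := by
      conv_lhs => rw [Ring.lie_def]
      rw [map_sub, partialL_ι_mul, partialL_mul_ι K Λ lam μ hRA, hpR, sub_mul]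
    have hPxx : DynL K Λ (partialL K lam P * FreeAlgebra.ι K μ * FreeAlgebra.ι K μ) = 0 := by
      rw [DynL_mul K Λ hxA, hDynx, map_mul, Module.End.mul_apply, theta_ι, lie_self, map_zero]
    rw [hpQ, map_sub, map_sub, hPxx]
    by_cases h : lam = μ
    · simp only [if_pos h]
      rw [hDynR, hPx, sub_zero, sub_neg_eq_add,
        show m + 2 = (m + 1) + 1 from rfl, succ_nsmul, succ_nsmul, succ_nsmul]
    · simp only [if_neg h, zero_mul, map_zero, sub_zero, zero_sub, neg_zero]
  rw [Finset.sum_congr rfl fun lam _ => by rw [key lam]]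
  rw [Finset.sum_eq_single μ (fun b _ hb => by rw [if_neg hb, TensorProduct.tmul_zero])
    (fun h => absurd (Finset.mem_univ μ) h)]
  rw [if_pos rfl, TensorProduct.tmul_smul]
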